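/- Let α ∈ ℝ, and suppose p_n ∈ ℤ, q_n ∈ ℤ_{>0} are coprime for all n ≥ 0 with q_n → ∞. Assume there exist positive constants ρ, σ, τ such that q_{n+1} ≥ ρ q_n and σ/(q_n q_{n+1}) ≤ |α - p_n/q_n| ≤ τ/(q_n q_{n+1}) for all large n. Then α is irrational and its irrationality exponent equals 1 + limsup_{n→∞} (log q_{n+1})/(log q_n). -/

import Mathlib

noncomputable def irrationalityExponent (α : ℝ) : EReal :=
  sSup {x : EReal | ∃ μ : ℝ, x = (μ : EReal) ∧
    {r : ℚ | |α - (r : ℝ)| < (r.den : ℝ) ^ (-μ)}.Infinite}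

open Filter Real

set_option maxHeartbeats 1000000


lemma aux_rat_dist (x y : ℚ) (h : x ≠ y) :
    (1:ℝ) / ((x.den : ℝ) * (y.den : ℝ)) ≤ |(x:ℝ) - (y:ℝ)| := by
  have hx : ((x.den : ℚ)) ≠ 0 := by exact_mod_cast x.den_ne_zero
  have hy : ((y.den : ℚ)) ≠ 0 := by exact_mod_cast y.den_ne_zero
  have e1 : (x:ℚ) * (x.den : ℚ) = (x.num : ℚ) := by
    nth_rewrite 1 [← Rat.num_div_den x]
    exact div_mul_cancel₀ _ hx
  have e2 : (y:ℚ) * (y.den : ℚ) = (y.num : ℚ) := by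
    nth_rewrite 1 [← Rat.num_div_den y]
    exact div_mul_cancel₀ _ hy
  have key : (x - y) * ((x.den : ℚ) * (y.den : ℚ))
      = ((x.num * y.den - y.num * x.den : ℤ) : ℚ) := by
    push_cast
    linear_combination (y.den : ℚ) * e1 - (x.den : ℚ) * e2
  have hz : x.num * y.den - y.num * x.den ≠ 0 := by
    intro h0
    apply h
    rw [h0] at key
    push_cast at key
    rcases mul_eq_zero.1 key with h1 | h1
    · linarith [sub_eq_zero.1 h1]
    · exact absurd h1 (mul_ne_zero hx hy)
  have h1 : (1:ℚ) ≤ |((x.num * y.den - y.num * x.den : ℤ) : ℚ)| := by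
    rw [← Int.cast_abs]
    exact_mod_cast Int.one_le_abs hz
  have hq : (1:ℚ) / ((x.den : ℚ) * (y.den : ℚ)) ≤ |x - y| := by
    rw [div_le_iff₀ (by positivity)]
    calc (1:ℚ) ≤ |((x.num * y.den - y.num * x.den : ℤ) : ℚ)| := h1
    _ = |x - y| * ((x.den : ℚ) * (y.den : ℚ)) := by
        rw [← key, abs_mul, abs_of_pos (by positivity : (0:ℚ) < (x.den : ℚ) * (y.den : ℚ))]
  calc (1:ℝ) / ((x.den : ℝ) * (y.den : ℝ)) = ((1 / ((x.den : ℚ) * (y.den : ℚ)) : ℚ) : ℝ) := by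
        push_cast; ring
  _ ≤ ((|x - y| : ℚ) : ℝ) := by exact_mod_cast hq
  _ = |(x:ℝ) - (y:ℝ)| := by rw [Rat.cast_abs]; push_cast; ring


lemma aux_den_eq {a b : ℤ} (hb : 0 < b) (h : IsCoprime a b) :
    (((a : ℚ) / (b : ℚ)).den : ℤ) = b := by
  apply Rat.den_div_eq_of_coprime hb
  rwa [Nat.Coprime, ← Int.gcd, ← Int.isCoprime_iff_gcd_eq_one]

lemma aux_finite (α : ℝ) (B : ℕ) :
    {r : ℚ | |α - (r:ℝ)| ≤ 1 ∧ r.den ≤ B}.Finite := by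
  set M : ℤ := ⌈(|α| + 1) * B⌉ with hM
  have hsub : {r : ℚ | |α - (r:ℝ)| ≤ 1 ∧ r.den ≤ B} ⊆
      (fun z : ℤ × ℕ => (z.1 : ℚ) / (z.2 : ℚ)) '' (Set.Icc (-M) M ×ˢ Set.Iic B) := by
    rintro r ⟨h1, h2⟩
    refine ⟨(r.num, r.den), ⟨?_, h2⟩, by simp [Rat.num_div_den]⟩
    have hr : |(r:ℝ)| ≤ |α| + 1 := by
      have := abs_sub_abs_le_abs_sub (r:ℝ) α
      rw [abs_sub_comm] at h1
      linarith [abs_sub_abs_le_abs_sub (r:ℝ) α, abs_sub_comm (r:ℝ) α ▸ h1]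
    have hnum : (|r.num| : ℝ) ≤ (|α| + 1) * B := by
      have h3 : (|r.num| : ℝ) = |(r:ℝ)| * r.den := by
        have hd : (0:ℝ) < (r.den : ℝ) := by exact_mod_cast r.pos
        rw [Rat.cast_def, abs_div, abs_of_pos hd]
        push_cast
        field_simp
      rw [h3]
      have : (r.den : ℝ) ≤ B := by exact_mod_cast h2
      have h0 : (0:ℝ) ≤ |(r:ℝ)| := abs_nonneg _
      nlinarith
    have hceil : (|r.num| : ℝ) ≤ (M : ℝ) := hnum.trans (Int.le_ceil _)
    have : |r.num| ≤ M := by exact_mod_cast hceil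
    exact ⟨neg_le_of_abs_le this, le_of_abs_le this⟩
  exact Set.Finite.subset (Set.Finite.image _ ((Set.finite_Icc _ _).prod (Set.finite_Iic _))) hsub

lemma aux_infinite (α : ℝ) (p q : ℕ → ℤ) (hqpos : ∀ n, 0 < q n)
    (hcop : ∀ n, IsCoprime (p n) (q n))
    (hqR : Tendsto (fun n => (q n : ℝ)) atTop atTop)
    (τ : ℝ) (hτ : 0 < τ)
    (happrox : ∀ᶠ n in atTop,
      |α - (p n : ℝ) / (q n : ℝ)| ≤ τ / ((q n : ℝ) * (q (n + 1) : ℝ)))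
    (μ c : ℝ) (hμc : μ - 1 < c)
    (hfreq : ∃ᶠ n in atTop, c < Real.log (q (n + 1) : ℝ) / Real.log (q n : ℝ)) :
    {r : ℚ | |α - (r : ℝ)| < (r.den : ℝ) ^ (-μ)}.Infinite := by
  by_contra hfin
  rw [Set.not_infinite] at hfin
  obtain ⟨B, hB⟩ := (hfin.image Rat.den).bddAbove
  have hδ : 0 < c - (μ - 1) := by linarith
  have hev : ∀ᶠ n in atTop,
      (|α - (p n : ℝ) / (q n : ℝ)| ≤ τ / ((q n : ℝ) * (q (n + 1) : ℝ))) ∧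
      (2:ℝ) ≤ (q n : ℝ) ∧ τ ≤ (q n : ℝ) ^ (c - (μ - 1)) ∧ (B : ℝ) < (q n : ℝ) := by
    filter_upwards [happrox, hqR.eventually_ge_atTop 2,
      ((tendsto_rpow_atTop hδ).comp hqR).eventually_ge_atTop τ,
      hqR.eventually_gt_atTop (B : ℝ)] with n h1 h2 h3 h4
    exact ⟨h1, h2, h3, h4⟩
  obtain ⟨n, hc, h1, h2, h3, h4⟩ := (hfreq.and_eventually hev).exists
  have hqn : (0:ℝ) < (q n : ℝ) := by linarith
  have hqn1 : (0:ℝ) < (q (n + 1) : ℝ) := by exact_mod_cast hqpos (n + 1)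
  have hlog : 0 < Real.log (q n : ℝ) := Real.log_pos (by linarith)
  have hlt : (q n : ℝ) ^ c < (q (n + 1) : ℝ) := by
    have h5 : c * Real.log (q n : ℝ) < Real.log (q (n + 1) : ℝ) := (lt_div_iff₀ hlog).1 hc
    calc (q n : ℝ) ^ c = Real.exp (c * Real.log (q n : ℝ)) := by
          rw [Real.rpow_def_of_pos hqn]; ring_nf
    _ < Real.exp (Real.log (q (n + 1) : ℝ)) := Real.exp_lt_exp.2 h5
    _ = (q (n + 1) : ℝ) := Real.exp_log hqn1
  have hsplit : (q n : ℝ) ^ c = (q n : ℝ) ^ (μ - 1) * (q n : ℝ) ^ (c - (μ - 1)) := by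
    rw [← Real.rpow_add hqn]; ring_nf
  have hkey : τ * (q n : ℝ) ^ (μ - 1) < (q (n + 1) : ℝ) := by
    calc τ * (q n : ℝ) ^ (μ - 1) ≤ (q n : ℝ) ^ (c - (μ - 1)) * (q n : ℝ) ^ (μ - 1) :=
          mul_le_mul_of_nonneg_right h3 (Real.rpow_nonneg hqn.le _)
    _ = (q n : ℝ) ^ c := by rw [hsplit]; ring
    _ < _ := hlt
  have hmem : |α - ((p n : ℝ) / (q n : ℝ))| < (q n : ℝ) ^ (-μ) := by
    have hmul : (q n : ℝ) * (q n : ℝ) ^ (μ - 1) = (q n : ℝ) ^ μ := by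
      nth_rewrite 1 [← Real.rpow_one (q n : ℝ)]
      rw [← Real.rpow_add hqn]
      ring_nf
    have hpow : (q n : ℝ) ^ (-μ) = 1 / ((q n : ℝ) * (q n : ℝ) ^ (μ - 1)) := by
      rw [Real.rpow_neg hqn.le, hmul, one_div]
    refine lt_of_le_of_lt h1 ?_
    rw [hpow, div_lt_div_iff₀ (by positivity) (by positivity)]
    nlinarith [hkey, hqn, Real.rpow_nonneg hqn.le (μ - 1)]
  set r : ℚ := (p n : ℚ) / (q n : ℚ) with hr
  have hden : ((r.den : ℤ)) = q n := aux_den_eq (hqpos n) (hcop n)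
  have hdenR : ((r.den : ℝ)) = (q n : ℝ) := by exact_mod_cast hden
  have hcast : ((r : ℝ)) = (p n : ℝ) / (q n : ℝ) := by rw [hr]; push_cast; ring
  have hrS : r ∈ {r : ℚ | |α - (r : ℝ)| < (r.den : ℝ) ^ (-μ)} := by
    rw [Set.mem_setOf_eq, hcast, hdenR]
    exact hmem
  have hrB : ((r.den : ℝ)) ≤ (B : ℝ) := by
    exact_mod_cast hB (Set.mem_image_of_mem _ hrS)
  rw [hdenR] at hrB
  linarith

lemma aux_not_infinite (α : ℝ) (p q : ℕ → ℤ) (hqpos : ∀ n, 0 < q n)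
    (hcop : ∀ n, IsCoprime (p n) (q n))
    (hqR : Tendsto (fun n => (q n : ℝ)) atTop atTop)
    (σ τ : ℝ) (hσ : 0 < σ) (hτ : 0 < τ)
    (happrox : ∀ᶠ n in atTop,
      σ / ((q n : ℝ) * (q (n + 1) : ℝ)) ≤ |α - (p n : ℝ) / (q n : ℝ)| ∧
      |α - (p n : ℝ) / (q n : ℝ)| ≤ τ / ((q n : ℝ) * (q (n + 1) : ℝ)))
    (μ c : ℝ) (hc1 : 1 < c) (hcμ : c < μ - 1)
    (hevc : ∀ᶠ n in atTop, Real.log (q (n + 1) : ℝ) / Real.log (q n : ℝ) < c) :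
    ¬ {r : ℚ | |α - (r : ℝ)| < (r.den : ℝ) ^ (-μ)}.Infinite := by
  classical
  intro hinf
  have hμ2 : 2 < μ := by linarith
  -- denominators are unbounded
  have hub : ∀ B : ℕ, ∃ r : ℚ, |α - (r:ℝ)| < (r.den : ℝ) ^ (-μ) ∧ B ≤ r.den := by
    intro B
    by_contra hco
    push_neg at hco
    refine hinf (Set.Finite.subset (aux_finite α B) ?_)
    rintro r hr
    refine ⟨le_trans hr.le ?_, (hco r hr).le⟩
    refine Real.rpow_le_one_of_one_le_of_nonpos ?_ (by linarith)
    exact_mod_cast r.pos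
  -- choose N beyond which everything holds
  obtain ⟨N, hN⟩ := eventually_atTop.1
    (happrox.and (hevc.and (hqR.eventually_ge_atTop 2)))
  -- bound on initial terms
  set K : ℝ := ((Finset.range (N + 2)).image fun k => (q k : ℝ)).max'
    (by simp) with hKdef
  have hK : ∀ k, k ≤ N + 1 → (q k : ℝ) ≤ K := by
    intro k hk
    refine Finset.le_max' _ _ ?_
    exact Finset.mem_image_of_mem _ (Finset.mem_range.2 (by omega))
  -- eventual conditions on the denominator b
  have hbev : ∀ᶠ b : ℕ in atTop, K < 2 * τ * (b : ℝ) ∧ 4 * τ ≤ (b : ℝ) ^ (μ - 2) ∧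
      1 / σ ≤ (b : ℝ) ^ (μ - 1 - c) ∧ 1 ≤ b := by
    have t1 : Tendsto (fun b : ℕ => 2 * τ * (b : ℝ)) atTop atTop :=
      (tendsto_natCast_atTop_atTop (R := ℝ)).const_mul_atTop (by positivity)
    have t2 : Tendsto (fun b : ℕ => (b : ℝ) ^ (μ - 2)) atTop atTop :=
      (tendsto_rpow_atTop (by linarith)).comp (tendsto_natCast_atTop_atTop (R := ℝ))
    have t3 : Tendsto (fun b : ℕ => (b : ℝ) ^ (μ - 1 - c)) atTop atTop :=
      (tendsto_rpow_atTop (by linarith)).comp (tendsto_natCast_atTop_atTop (R := ℝ))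
    filter_upwards [t1.eventually_gt_atTop K, t2.eventually_ge_atTop (4 * τ),
      t3.eventually_ge_atTop (1 / σ), eventually_ge_atTop 1] with b h1 h2 h3 h4
    exact ⟨h1, h2, h3, h4⟩
  obtain ⟨b₀, hb₀⟩ := eventually_atTop.1 hbev
  obtain ⟨r, hrmem, hrden⟩ := hub b₀
  obtain ⟨hKb, h4τ, h1σ, hb1⟩ := hb₀ r.den hrden
  set b : ℝ := (r.den : ℝ) with hbdef
  have hb0 : (0:ℝ) < b := by rw [hbdef]; exact_mod_cast r.pos
  -- find minimal n with 2τb ≤ q (n+1)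
  have hex : ∃ n, 2 * τ * b ≤ (q (n + 1) : ℝ) := by
    obtain ⟨M, hM⟩ := eventually_atTop.1 (hqR.eventually_ge_atTop (2 * τ * b))
    exact ⟨M, hM (M + 1) (by omega)⟩
  set n := Nat.find hex with hn
  have hfind : 2 * τ * b ≤ (q (n + 1) : ℝ) := Nat.find_spec hex
  have hmin : ∀ m, m < n → (q (m + 1) : ℝ) < 2 * τ * b := by
    intro m hm
    have := Nat.find_min hex hm
    push_neg at this
    exact this
  clear_value n
  have hnN : N < n := by
    by_contra hle
    push_neg at hle
    have := hK (n + 1) (by omega)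
    linarith
  obtain ⟨⟨hlo, hhi⟩, hec, h2q⟩ := hN n (by omega)
  have hn1 : 1 ≤ n := le_trans (Nat.one_le_iff_ne_zero.2 (by omega)) le_rfl
  have hqn_lt : (q n : ℝ) < 2 * τ * b := by
    have := hmin (n - 1) (Nat.sub_lt (by omega) one_pos)
    rwa [Nat.sub_add_cancel hn1] at this
  have hqn : (0:ℝ) < (q n : ℝ) := by linarith
  have hqn1 : (0:ℝ) < (q (n + 1) : ℝ) := by exact_mod_cast hqpos (n + 1)
  have hlog : 0 < Real.log (q n : ℝ) := Real.log_pos (by linarith)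
  have hup : (q (n + 1) : ℝ) < (q n : ℝ) ^ c := by
    have h5 : Real.log (q (n + 1) : ℝ) < c * Real.log (q n : ℝ) := (div_lt_iff₀ hlog).1 hec
    calc (q (n + 1) : ℝ) = Real.exp (Real.log (q (n + 1) : ℝ)) := (Real.exp_log hqn1).symm
    _ < Real.exp (c * Real.log (q n : ℝ)) := Real.exp_lt_exp.2 h5
    _ = (q n : ℝ) ^ c := by rw [Real.rpow_def_of_pos hqn]; ring_nf
  set y : ℚ := (p n : ℚ) / (q n : ℚ) with hy
  have hyden : ((y.den : ℤ)) = q n := aux_den_eq (hqpos n) (hcop n)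
  have hydenR : ((y.den : ℝ)) = (q n : ℝ) := by exact_mod_cast hyden
  have hycast : ((y : ℝ)) = (p n : ℝ) / (q n : ℝ) := by rw [hy]; push_cast; ring
  by_cases hry : r = y
  · -- r is the convergent itself
    have hbq : b = (q n : ℝ) := by rw [hbdef, hry, hydenR]
    have hrm : |α - (p n : ℝ) / (q n : ℝ)| < (q n : ℝ) ^ (-μ) := by
      rw [← hycast, ← hry, ← hbq]; exact hrmem
    have hqc : (0:ℝ) < (q n : ℝ) ^ c := by positivity
    have hchain : σ / ((q n : ℝ) * (q n : ℝ) ^ c) < (q n : ℝ) ^ (-μ) := by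
      refine lt_of_le_of_lt ?_ hrm
      refine le_trans ?_ hlo
      apply div_le_div_of_nonneg_left hσ.le (by positivity)
      exact mul_le_mul_of_nonneg_left hup.le hqn.le
    rw [hbq] at h1σ
    have e1 : (q n : ℝ) ^ (1 + c) = (q n : ℝ) * (q n : ℝ) ^ c := by
      rw [Real.rpow_add hqn, Real.rpow_one]
    have e2 : (q n : ℝ) ^ (1 + c) * (q n : ℝ) ^ (μ - 1 - c) = (q n : ℝ) ^ μ := by
      rw [← Real.rpow_add hqn]; ring_nf
    have hinv : (q n : ℝ) ^ (-μ) = 1 / (q n : ℝ) ^ μ := by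
      rw [Real.rpow_neg hqn.le, one_div]
    rw [hinv, ← e1] at hchain
    rw [div_lt_div_iff₀ (by positivity) (by positivity)] at hchain
    have h8 : (q n : ℝ) ^ (1 + c) ≤ σ * (q n : ℝ) ^ μ := by
      calc (q n : ℝ) ^ (1 + c) = σ * ((q n : ℝ) ^ (1 + c) * (1 / σ)) := by field_simp
      _ ≤ σ * ((q n : ℝ) ^ (1 + c) * (q n : ℝ) ^ (μ - 1 - c)) := by
          apply mul_le_mul_of_nonneg_left _ hσ.le
          exact mul_le_mul_of_nonneg_left h1σ (by positivity)
      _ = σ * (q n : ℝ) ^ μ := by rw [e2]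
    nlinarith [hchain, h8]
  · -- r is distinct from the convergent
    have hd1 : 1 / (b * (q n : ℝ)) ≤ |(r:ℝ) - (y:ℝ)| := by
      have := aux_rat_dist r y hry
      rwa [hydenR, ← hbdef] at this
    have hd2 : |α - (y:ℝ)| ≤ 1 / (2 * b * (q n : ℝ)) := by
      rw [hycast]
      refine hhi.trans ?_
      rw [div_le_div_iff₀ (by positivity) (by positivity)]
      nlinarith [hfind, hqn, hτ, hb0]
    have htri : 1 / (2 * b * (q n : ℝ)) ≤ |α - (r:ℝ)| := by
      have h6 : |(r:ℝ) - (y:ℝ)| ≤ |α - (r:ℝ)| + |α - (y:ℝ)| := by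
        have := abs_sub (α - (y:ℝ)) (α - (r:ℝ))
        calc |(r:ℝ) - (y:ℝ)| = |(α - (y:ℝ)) - (α - (r:ℝ))| := by ring_nf
        _ ≤ |α - (y:ℝ)| + |α - (r:ℝ)| := abs_sub _ _
        _ = |α - (r:ℝ)| + |α - (y:ℝ)| := by ring
      have : 1 / (b * (q n : ℝ)) - 1 / (2 * b * (q n : ℝ)) ≤ |α - (r:ℝ)| := by
        linarith [hd1, hd2, h6]
      refine le_trans (le_of_eq ?_) this
      field_simp
      ring
    have hfar : 1 / (4 * τ * b ^ 2) < |α - (r:ℝ)| := by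
      refine lt_of_lt_of_le ?_ htri
      rw [div_lt_div_iff₀ (by positivity) (by positivity)]
      nlinarith [hqn_lt, hb0, hqn]
    have hbsplit : (b : ℝ) ^ μ = b ^ (μ - 2) * b ^ 2 := by
      rw [← Real.rpow_natCast b 2, ← Real.rpow_add hb0]
      norm_num
    have hclose : ((r.den : ℝ)) ^ (-μ) ≤ 1 / (4 * τ * b ^ 2) := by
      rw [← hbdef, Real.rpow_neg hb0.le, inv_eq_one_div]
      apply one_div_le_one_div_of_le (by positivity)
      nlinarith [h4τ, sq_nonneg b, hbsplit]
    linarith [hrmem, hclose, hfar]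

theorem irrationality_exponent_of_good_approximations (α : ℝ) (p q : ℕ → ℤ)
    (hqpos : ∀ n, 0 < q n)
    (hcop : ∀ n, IsCoprime (p n) (q n))
    (hqinf : Filter.Tendsto (fun n => q n) Filter.atTop Filter.atTop)
    (ρ σ τ : ℝ) (hρ : 0 < ρ) (hσ : 0 < σ) (hτ : 0 < τ)
    (hgrow : ∀ᶠ n in Filter.atTop, ρ * (q n : ℝ) ≤ (q (n + 1) : ℝ))
    (happrox : ∀ᶠ n in Filter.atTop,
      σ / ((q n : ℝ) * (q (n + 1) : ℝ)) ≤ |α - (p n : ℝ) / (q n : ℝ)| ∧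
      |α - (p n : ℝ) / (q n : ℝ)| ≤ τ / ((q n : ℝ) * (q (n + 1) : ℝ))) :
    Irrational α ∧
      irrationalityExponent α
        = 1 + Filter.limsup
            (fun n => ((Real.log (q (n + 1) : ℝ) / Real.log (q n : ℝ) : ℝ) : EReal))
            Filter.atTop := by
  have hqR : Tendsto (fun n => (q n : ℝ)) atTop atTop :=
    (tendsto_intCast_atTop_atTop (R := ℝ)).comp hqinf
  set L : EReal := Filter.limsup
      (fun n => ((Real.log (q (n + 1) : ℝ) / Real.log (q n : ℝ) : ℝ) : EReal))
      Filter.atTop with hL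
  -- L ≥ 1
  have hL1 : (1 : EReal) ≤ L := by
    rw [← EReal.ge_of_forall_gt_iff_ge]
    intro z hz
    have hz1 : z < 1 := by exact_mod_cast hz
    have hev : ∀ᶠ n in atTop, ((z : ℝ) : EReal) ≤
        ((Real.log (q (n + 1) : ℝ) / Real.log (q n : ℝ) : ℝ) : EReal) := by
      filter_upwards [hgrow, hqR.eventually_ge_atTop 2,
        (Real.tendsto_log_atTop.comp hqR).eventually_ge_atTop (|Real.log ρ| / (1 - z))]
        with n h1 h2 h3
      simp only [Function.comp_apply] at h3
      have hqn : (0:ℝ) < (q n : ℝ) := by linarith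
      have hqn1 : (0:ℝ) < (q (n + 1) : ℝ) := by exact_mod_cast hqpos (n + 1)
      have hlog : 0 < Real.log (q n : ℝ) := Real.log_pos (by linarith)
      have hlog1 : Real.log ρ + Real.log (q n : ℝ) ≤ Real.log (q (n + 1) : ℝ) := by
        rw [← Real.log_mul hρ.ne' hqn.ne']
        exact Real.log_le_log (by positivity) h1
      have h4 : |Real.log ρ| ≤ (1 - z) * Real.log (q n : ℝ) := by
        rw [div_le_iff₀ (by linarith)] at h3
        linarith [h3]
      have h5 : z ≤ Real.log (q (n + 1) : ℝ) / Real.log (q n : ℝ) := by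
        rw [le_div_iff₀ hlog]
        have := neg_abs_le (Real.log ρ)
        nlinarith [hlog1, hlog, h4]
      exact_mod_cast h5
    exact le_limsup_of_frequently_le hev.frequently
  have hLbot : L ≠ ⊥ := fun h => by
    rw [h, le_bot_iff] at hL1
    exact (by rw [← EReal.coe_one]; exact EReal.coe_ne_bot 1 : ((1:EReal)) ≠ ⊥) hL1
  -- irrationality
  have hirr : Irrational α := by
    rw [Irrational]
    rintro ⟨x, hx⟩
    have hev : ∀ᶠ n in atTop,
        (σ / ((q n : ℝ) * (q (n + 1) : ℝ)) ≤ |α - (p n : ℝ) / (q n : ℝ)| ∧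
          |α - (p n : ℝ) / (q n : ℝ)| ≤ τ / ((q n : ℝ) * (q (n + 1) : ℝ))) ∧
        τ * (x.den : ℝ) < (q (n + 1) : ℝ) := by
      filter_upwards [happrox,
        (hqR.comp (tendsto_add_atTop_nat 1)).eventually_gt_atTop (τ * (x.den : ℝ))]
        with n h1 h2
      exact ⟨h1, h2⟩
    obtain ⟨n, ⟨hlo, hhi⟩, hbig⟩ := hev.exists
    have hqn : (0:ℝ) < (q n : ℝ) := by exact_mod_cast hqpos n
    have hqn1 : (0:ℝ) < (q (n + 1) : ℝ) := by exact_mod_cast hqpos (n + 1)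
    set y : ℚ := (p n : ℚ) / (q n : ℚ) with hy
    have hydenR : ((y.den : ℝ)) ≤ (q n : ℝ) := by
      have : (y.den : ℤ) ≤ q n := by
        have := @Rat.den_dvd (p n) (q n)
        rw [← Rat.divInt_eq_div] at hy
        rw [hy]
        exact Int.le_of_dvd (hqpos n) this
      exact_mod_cast this
    have hyd0 : (0:ℝ) < (y.den : ℝ) := by exact_mod_cast y.pos
    have hycast : ((y : ℝ)) = (p n : ℝ) / (q n : ℝ) := by rw [hy]; push_cast; ring
    have hxy : x ≠ y := by
      intro hxyeq
      rw [← hx, hxyeq, hycast] at hlo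
      simp at hlo
      have : (0:ℝ) < σ / ((q n : ℝ) * (q (n + 1) : ℝ)) := by positivity
      linarith
    have hdist := aux_rat_dist x y hxy
    have hxd0 : (0:ℝ) < (x.den : ℝ) := by exact_mod_cast x.pos
    have h1 : (1:ℝ) / ((x.den : ℝ) * (q n : ℝ)) ≤ |α - (p n : ℝ) / (q n : ℝ)| := by
      rw [← hx, ← hycast]
      refine le_trans ?_ hdist
      apply div_le_div_of_nonneg_left one_pos.le (by positivity)
      exact mul_le_mul_of_nonneg_left hydenR hxd0.le
    have h2 := h1.trans hhi
    rw [div_le_div_iff₀ (by positivity) (by positivity)] at h2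
    nlinarith [h2, hqn, hbig, hxd0]
  refine ⟨hirr, ?_⟩
  apply le_antisymm
  · -- upper bound
    apply sSup_le
    rintro x ⟨μ, rfl, hinf⟩
    rcases eq_or_ne L ⊤ with hT | hT
    · rw [hT, ← EReal.coe_one, EReal.coe_add_top]
      exact le_top
    · have hlval : L = ((L.toReal : ℝ) : EReal) := (EReal.coe_toReal hT hLbot).symm
      set l : ℝ := L.toReal with hldef
      have hl1 : (1:ℝ) ≤ l := by rw [hlval] at hL1; exact_mod_cast hL1
      by_contra hcon
      push_neg at hcon
      rw [hlval, ← EReal.coe_one, ← EReal.coe_add] at hcon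
      have hμl : 1 + l < μ := by exact_mod_cast hcon
      obtain ⟨c, hc1, hc2⟩ := exists_between (show l < μ - 1 by linarith)
      have hevc : ∀ᶠ n in atTop,
          Real.log (q (n + 1) : ℝ) / Real.log (q n : ℝ) < c := by
        have hcc : L < ((c : ℝ) : EReal) := by rw [hlval]; exact_mod_cast hc1
        rw [hL] at hcc
        have h := eventually_lt_of_limsup_lt hcc
        filter_upwards [h] with n hn
        exact_mod_cast hn
      exact aux_not_infinite α p q hqpos hcop hqR σ τ hσ hτ happrox μ c
        (by linarith) hc2 hevc hinf
  · -- lower bound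
    rw [← EReal.ge_of_forall_gt_iff_ge]
    intro z hz
    have happrox' : ∀ᶠ n in atTop,
        |α - (p n : ℝ) / (q n : ℝ)| ≤ τ / ((q n : ℝ) * (q (n + 1) : ℝ)) :=
      happrox.mono fun n h => h.2
    have key : ∃ c : ℝ, z - 1 < c ∧
        (∃ᶠ n in atTop, c < Real.log (q (n + 1) : ℝ) / Real.log (q n : ℝ)) := by
      rcases eq_or_ne L ⊤ with hT | hT
      · refine ⟨z, by linarith, ?_⟩
        have hlt : ((z : ℝ) : EReal) < Filter.limsup
            (fun n => ((Real.log (q (n + 1) : ℝ) / Real.log (q n : ℝ) : ℝ) : EReal))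
            Filter.atTop := by
          rw [← hL, hT]; exact EReal.coe_lt_top z
        have h := frequently_lt_of_lt_limsup (by isBoundedDefault) hlt
        exact h.mono fun n hn => by exact_mod_cast hn
      · have hlval : L = ((L.toReal : ℝ) : EReal) := (EReal.coe_toReal hT hLbot).symm
        set l : ℝ := L.toReal with hldef
        have hzl : z < 1 + l := by
          rw [hlval, ← EReal.coe_one, ← EReal.coe_add] at hz
          exact_mod_cast hz
        obtain ⟨c, hc1, hc2⟩ := exists_between (show z - 1 < l by linarith)
        refine ⟨c, hc1, ?_⟩
        have hlt : ((c : ℝ) : EReal) < Filter.limsup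
            (fun n => ((Real.log (q (n + 1) : ℝ) / Real.log (q n : ℝ) : ℝ) : EReal))
            Filter.atTop := by
          rw [← hL, hlval]; exact_mod_cast hc2
        have h := frequently_lt_of_lt_limsup (by isBoundedDefault) hlt
        exact h.mono fun n hn => by exact_mod_cast hn
    obtain ⟨c, hc1, hc2⟩ := key
    have hinf := aux_infinite α p q hqpos hcop hqR τ hτ happrox' z c hc1 hc2
    exact le_sSup ⟨z, rfl, hinf⟩
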